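/- Let U : (0, ∞) → (0, ∞), let γ > 0 and ρ < 0, and let A : (0, ∞) → ℝ satisfy A(t) → 0 as t → ∞ and A(t) ≠ 0 for all sufficiently large t. Then the following are equivalent: (i) for every x > 0, lim_{t→∞} (U(tx)/U(t) − x^{1/γ})/A(t) = x^{1/γ}(x^ρ − 1)/ρ; (ii) for every x > 0, lim_{t→∞} (log U(tx) − log U(t) − γ^{−1} log x)/A(t) = (x^ρ − 1)/ρ. -/

import Mathlib

open Filter Real Set Topology

private lemma tendsto_zero_of_div (A f : ℝ → ℝ) (hA : Tendsto A atTop (𝓝 0))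
    (hA' : ∀ᶠ t in atTop, A t ≠ 0) (c : ℝ)
    (hf : Tendsto (fun t => f t / A t) atTop (𝓝 c)) :
    Tendsto f atTop (𝓝 0) := by
  have h := hf.mul hA
  rw [mul_zero] at h
  refine h.congr' ?_
  filter_upwards [hA'] with t ht
  field_simp

private lemma log_slope : Tendsto (fun u : ℝ => Real.log (1 + u) / u) (𝓝[≠] (0:ℝ)) (𝓝 1) := by
  have h : HasDerivAt Real.log 1 1 := by
    simpa using Real.hasDerivAt_log one_ne_zero
  rw [hasDerivAt_iff_tendsto_slope] at h
  have hmap : Tendsto (fun u : ℝ => 1 + u) (𝓝[≠] (0:ℝ)) (𝓝[≠] (1:ℝ)) := by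
    apply tendsto_nhdsWithin_of_tendsto_nhds_of_eventually_within
    · have h0 : Tendsto (fun u : ℝ => 1 + u) (𝓝 0) (𝓝 (1 + 0)) :=
        (continuous_const.add continuous_id).tendsto 0
      rw [add_zero] at h0
      exact h0.mono_left nhdsWithin_le_nhds
    · filter_upwards [self_mem_nhdsWithin] with u hu
      simp only [mem_compl_iff, mem_singleton_iff] at hu ⊢
      intro h'; exact hu (by linarith)
  have := h.comp hmap
  refine this.congr fun u => ?_
  simp [slope, Real.log_one, div_eq_inv_mul]

private lemma exp_slope : Tendsto (fun u : ℝ => (Real.exp u - 1) / u) (𝓝[≠] (0:ℝ)) (𝓝 1) := by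
  have h : HasDerivAt Real.exp 1 0 := by simpa using Real.hasDerivAt_exp 0
  rw [hasDerivAt_iff_tendsto_slope] at h
  refine h.congr fun u => ?_
  simp [slope, Real.exp_zero, div_eq_inv_mul]

noncomputable def gaux (u : ℝ) : ℝ := if u = 0 then 1 else Real.log (1 + u) / u
noncomputable def haux (u : ℝ) : ℝ := if u = 0 then 1 else (Real.exp u - 1) / u

private lemma gaux_tendsto : Tendsto gaux (𝓝 (0:ℝ)) (𝓝 1) := by
  rw [← nhdsNE_sup_pure (0:ℝ)]
  refine Tendsto.sup ?_ ?_
  · refine log_slope.congr' ?_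
    filter_upwards [self_mem_nhdsWithin] with u hu
    simp only [mem_compl_iff, mem_singleton_iff] at hu
    simp [gaux, hu]
  · have : gaux 0 = 1 := by simp [gaux]
    simpa [this] using tendsto_pure_nhds gaux 0

private lemma haux_tendsto : Tendsto haux (𝓝 (0:ℝ)) (𝓝 1) := by
  rw [← nhdsNE_sup_pure (0:ℝ)]
  refine Tendsto.sup ?_ ?_
  · refine exp_slope.congr' ?_
    filter_upwards [self_mem_nhdsWithin] with u hu
    simp only [mem_compl_iff, mem_singleton_iff] at hu
    simp [haux, hu]
  · have : haux 0 = 1 := by simp [haux]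
    simpa [this] using tendsto_pure_nhds haux 0

private lemma log_eq_gaux (u : ℝ) : Real.log (1 + u) = gaux u * u := by
  rcases eq_or_ne u 0 with h | h
  · simp [h, gaux]
  · rw [gaux, if_neg h, div_mul_cancel₀ _ h]

private lemma exp_eq_haux (u : ℝ) : Real.exp u - 1 = haux u * u := by
  rcases eq_or_ne u 0 with h | h
  · simp [h, haux]
  · rw [haux, if_neg h, div_mul_cancel₀ _ h]

/-- Equivalence of the second-order regular variation condition for the tail quantile
function `U` and its logarithmic form: for `γ > 0`, `ρ < 0` and `A(t) → 0` eventually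
nonzero, `(U(tx)/U(t) - x^{1/γ})/A(t) → x^{1/γ}(x^ρ-1)/ρ` for all `x > 0` if and only if
`(log U(tx) - log U(t) - γ⁻¹ log x)/A(t) → (x^ρ-1)/ρ` for all `x > 0`. -/
theorem stmt_11 (U : ℝ → ℝ) (hU : ∀ t : ℝ, 0 < t → 0 < U t)
    (γ ρ : ℝ) (hγ : 0 < γ) (hρ : ρ < 0)
    (A : ℝ → ℝ) (hA : Tendsto A atTop (𝓝 0)) (hA' : ∀ᶠ t in atTop, A t ≠ 0) :
    (∀ x : ℝ, 0 < x → Tendsto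
        (fun t => (U (t * x) / U t - x ^ (1 / γ)) / A t) atTop
        (𝓝 (x ^ (1 / γ) * (x ^ ρ - 1) / ρ))) ↔
    (∀ x : ℝ, 0 < x → Tendsto
        (fun t => (Real.log (U (t * x)) - Real.log (U t) - γ⁻¹ * Real.log x) / A t) atTop
        (𝓝 ((x ^ ρ - 1) / ρ))) := by
  constructor
  · intro H x hx
    have hxγ : (0:ℝ) < x ^ (1 / γ) := Real.rpow_pos_of_pos hx _
    set R : ℝ → ℝ := fun t => U (t * x) / U t with hR
    set u : ℝ → ℝ := fun t => R t / x ^ (1 / γ) - 1 with hu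
    have h1 := H x hx
    -- R t - x^{1/γ} → 0
    have h0 : Tendsto (fun t => R t - x ^ (1 / γ)) atTop (𝓝 0) :=
      tendsto_zero_of_div A _ hA hA' _ h1
    have hu0 : Tendsto u atTop (𝓝 0) := by
      have := h0.div_const (x ^ (1 / γ))
      rw [zero_div] at this
      refine this.congr fun t => ?_
      simp only [hu]; rw [sub_div, div_self hxγ.ne']
    -- eventual positivity
    have hpos : ∀ᶠ t : ℝ in atTop, 0 < t := eventually_gt_atTop (0:ℝ)
    have key : ∀ᶠ t in atTop,
        (Real.log (U (t * x)) - Real.log (U t) - γ⁻¹ * Real.log x) / A t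
          = gaux (u t) * ((R t - x ^ (1 / γ)) / A t / x ^ (1 / γ)) := by
      filter_upwards [hpos, hA'] with t ht hAt
      have hUt := hU t ht
      have hUtx := hU (t * x) (mul_pos ht hx)
      have hRpos : 0 < R t := div_pos hUtx hUt
      have hlog : Real.log (U (t * x)) - Real.log (U t) - γ⁻¹ * Real.log x
          = Real.log (1 + u t) := by
        rw [show (1 : ℝ) + u t = R t / x ^ (1/γ) by simp [hu]]
        rw [Real.log_div hRpos.ne' hxγ.ne', hR]
        rw [Real.log_div hUtx.ne' hUt.ne', Real.log_rpow hx]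
        ring
      rw [hlog, log_eq_gaux, mul_div_assoc]
      congr 1
      have : u t = (R t - x ^ (1 / γ)) / x ^ (1 / γ) := by
        simp only [hu]; rw [sub_div, div_self hxγ.ne']
      rw [this]
      ring
    have hlim : Tendsto (fun t => gaux (u t) * ((R t - x ^ (1 / γ)) / A t / x ^ (1 / γ)))
        atTop (𝓝 (1 * (x ^ (1 / γ) * (x ^ ρ - 1) / ρ / x ^ (1 / γ)))) :=
      (gaux_tendsto.comp hu0).mul (h1.div_const _)
    have heq : 1 * (x ^ (1 / γ) * (x ^ ρ - 1) / ρ / x ^ (1 / γ)) = (x ^ ρ - 1) / ρ := by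
      rw [one_mul, mul_div_assoc, mul_div_cancel_left₀ _ hxγ.ne']
    rw [heq] at hlim
    exact hlim.congr' (key.mono fun t ht => ht.symm)
  · intro H x hx
    have hxγ : (0:ℝ) < x ^ (1 / γ) := Real.rpow_pos_of_pos hx _
    set L : ℝ → ℝ := fun t => Real.log (U (t * x)) - Real.log (U t) - γ⁻¹ * Real.log x with hL
    have h1 := H x hx
    have hL0 : Tendsto L atTop (𝓝 0) := tendsto_zero_of_div A _ hA hA' _ h1
    have hpos : ∀ᶠ t : ℝ in atTop, 0 < t := eventually_gt_atTop (0:ℝ)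
    have key : ∀ᶠ t in atTop,
        (U (t * x) / U t - x ^ (1 / γ)) / A t
          = x ^ (1 / γ) * haux (L t) * (L t / A t) := by
      filter_upwards [hpos, hA'] with t ht hAt
      have hUt := hU t ht
      have hUtx := hU (t * x) (mul_pos ht hx)
      have hRpos : 0 < U (t * x) / U t := div_pos hUtx hUt
      have hexp : U (t * x) / U t = x ^ (1 / γ) * Real.exp (L t) := by
        have : Real.exp (L t) = (U (t * x) / U t) / x ^ (1 / γ) := by
          show Real.exp (Real.log (U (t * x)) - Real.log (U t) - γ⁻¹ * Real.log x) = _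
          rw [show Real.log (U (t * x)) - Real.log (U t) - γ⁻¹ * Real.log x
              = Real.log ((U (t * x) / U t) / x ^ (1 / γ)) by
            rw [Real.log_div hRpos.ne' hxγ.ne', Real.log_div hUtx.ne' hUt.ne',
              Real.log_rpow hx]; ring]
          exact Real.exp_log (div_pos hRpos hxγ)
        rw [this]; field_simp
      rw [hexp]
      have : x ^ (1 / γ) * Real.exp (L t) - x ^ (1 / γ)
          = x ^ (1 / γ) * (haux (L t) * L t) := by
        rw [← exp_eq_haux]; ring
      rw [this]
      field_simp
    have hlim : Tendsto (fun t => x ^ (1 / γ) * haux (L t) * (L t / A t))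
        atTop (𝓝 (x ^ (1 / γ) * 1 * ((x ^ ρ - 1) / ρ))) :=
      ((tendsto_const_nhds.mul (haux_tendsto.comp hL0)).mul h1)
    have heq : x ^ (1 / γ) * 1 * ((x ^ ρ - 1) / ρ) = x ^ (1 / γ) * (x ^ ρ - 1) / ρ := by
      ring
    rw [heq] at hlim
    exact hlim.congr' (key.mono fun t ht => ht.symm)
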